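/- Let D = (G, O, w) be a weighted oriented graph and let C be a basic 5-cycle of D. Then C has the ⋆-property if and only if |C ∩ V(C)| = 3 for every strong vertex cover C of D. -/

import Mathlib

/-! ## Weighted oriented graphs -/

/-- A weighted oriented graph `D = (G, 𝒪, w)`: an orientation of a finite simple
graph together with a weight function, where sources have weight `1`. -/
structure WOGraph (V : Type) where
  /-- the set of directed edges -/
  E : V → V → Prop
  irrefl : ∀ x, ¬ E x x
  asymm : ∀ x y, E x y → ¬ E y x
  /-- the weight function -/
  w : V → ℕ
  w_pos : ∀ x, 1 ≤ w x
  source_one : ∀ x, (∀ y, ¬ E y x) → w x = 1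

namespace WOGraph

variable {V : Type}

/-- The underlying simple graph `G` of `D`. -/
def graph (D : WOGraph V) : SimpleGraph V := SimpleGraph.fromRel D.E

/-- Out-neighbourhood `N⁺_D(x)`. -/
def outN (D : WOGraph V) (x : V) : Set V := {y | D.E x y}

/-- In-neighbourhood `N⁻_D(x)`. -/
def inN (D : WOGraph V) (x : V) : Set V := {y | D.E y x}

/-- Neighbourhood `N_D(x)`. -/
def nbr (D : WOGraph V) (x : V) : Set V := {y | D.E x y ∨ D.E y x}

/-- `N_D(A)` for a set `A` of vertices. -/
def nbrS (D : WOGraph V) (A : Set V) : Set V := {y | ∃ a ∈ A, y ∈ D.nbr a}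

/-- `N⁺_D(A)` for a set `A` of vertices. -/
def outNS (D : WOGraph V) (A : Set V) : Set V := {y | ∃ a ∈ A, D.E a y}

/-- `V⁺`, the set of vertices of weight `> 1`. -/
def Vplus (D : WOGraph V) : Set V := {x | 1 < D.w x}

/-- A vertex cover of `D`. -/
def IsVC (D : WOGraph V) (C : Set V) : Prop := ∀ u v, D.E u v → u ∈ C ∨ v ∈ C

/-- `L₁(C)`. -/
def L1 (D : WOGraph V) (C : Set V) : Set V := {x | x ∈ C ∧ ∃ y, D.E x y ∧ y ∉ C}

/-- `L₂(C)`. -/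
def L2 (D : WOGraph V) (C : Set V) : Set V :=
  {x | x ∈ C ∧ x ∉ D.L1 C ∧ ∃ y, D.E y x ∧ y ∉ C}

/-- `L₃(C)`. -/
def L3 (D : WOGraph V) (C : Set V) : Set V := {x | x ∈ C ∧ x ∉ D.L1 C ∧ x ∉ D.L2 C}

/-- A strong vertex cover of `D`. -/
def IsStrongVC (D : WOGraph V) (C : Set V) : Prop :=
  D.IsVC C ∧ ∀ x ∈ D.L3 C, ∃ y, D.E y x ∧ y ∈ C ∧ y ∉ D.L1 C ∧ 1 < D.w y

/-- A weighted oriented subgraph of `D`. -/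
structure OSub (D : WOGraph V) where
  verts : Set V
  E : V → V → Prop
  sub : ∀ u v, E u v → D.E u v
  memL : ∀ u v, E u v → u ∈ verts
  memR : ∀ u v, E u v → v ∈ verts

namespace OSub

variable {D : WOGraph V}

/-- The underlying simple graph of a weighted oriented subgraph. -/
def graph (H : D.OSub) : SimpleGraph V := SimpleGraph.fromRel H.E

/-- Neighbourhood inside the subgraph. -/
def nbr (H : D.OSub) (x : V) : Set V := {y | H.E x y ∨ H.E y x}

/-- Degree inside the subgraph. -/
noncomputable def deg (H : D.OSub) (x : V) : ℕ := (H.nbr x).ncard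

/-- `H` is contained in `K`. -/
def le (H K : D.OSub) : Prop := H.verts ⊆ K.verts ∧ ∀ u v, H.E u v → K.E u v

end OSub

/-- The induced weighted oriented subgraph on a set `A` of vertices. -/
def induced (D : WOGraph V) (A : Set V) : D.OSub where
  verts := A
  E u v := D.E u v ∧ u ∈ A ∧ v ∈ A
  sub _ _ h := h.1
  memL _ _ h := h.2.1
  memR _ _ h := h.2.2

/-- `K` is an induced weighted oriented subgraph of `D`. -/
def IsInducedSub {D : WOGraph V} (K : D.OSub) : Prop :=
  ∀ u v, D.E u v → u ∈ K.verts → v ∈ K.verts → K.E u v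

/-- A root oriented tree (ROT) with parent `v`. -/
def IsROT (D : WOGraph V) (T : D.OSub) (v : V) : Prop :=
  v ∈ T.verts ∧ T.graph.IsAcyclic ∧
  (∀ x ∈ T.verts, Relation.ReflTransGen T.E v x) ∧
  (∀ x ∈ T.verts, D.w x = 1 → (T.deg x = 1 ∧ x ≠ v) ∨ (T.verts = {v} ∧ x = v))

/-- A unicycle oriented subgraph whose (unique) cycle has vertex set `Cs`. -/
def IsUnicycle (D : WOGraph V) (B : D.OSub) (Cs : Set V) : Prop :=
  (∃ (n : ℕ) (f : ZMod n → V), 3 ≤ n ∧ Function.Injective f ∧ Set.range f = Cs ∧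
      ∀ i, B.E (f i) (f (i + 1))) ∧
  (∀ (a : V) (p : B.graph.Walk a a), p.IsCycle → {x | x ∈ p.support} = Cs) ∧
  (∀ y ∈ B.verts, y ∉ Cs → ∃ x ∈ Cs, Relation.ReflTransGen B.E x y) ∧
  (∀ x ∈ B.verts, D.w x = 1 → B.deg x = 1)

/-- A `⋆`-semi-forest structure on a weighted oriented subgraph `H` of `D`. -/
structure SSF (D : WOGraph V) (H : D.OSub) where
  r : ℕ
  s : ℕ
  T : Fin r → D.OSub
  parent : Fin r → V
  B : Fin s → D.OSub
  Cs : Fin s → Set V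
  hT : ∀ i, D.IsROT (T i) (parent i)
  hB : ∀ j, D.IsUnicycle (B j) (Cs j)
  hverts : H.verts = (⋃ i, (T i).verts) ∪ (⋃ j, (B j).verts)
  hE : ∀ u v, H.E u v ↔ ((∃ i, (T i).E u v) ∨ (∃ j, (B j).E u v))
  hTT : ∀ i i', i ≠ i' → Disjoint (T i).verts (T i').verts
  hBB : ∀ j j', j ≠ j' → Disjoint (B j).verts (B j').verts
  hTB : ∀ i j, Disjoint (T i).verts (B j).verts
  wv : Fin r → V
  hwv_not : ∀ i, wv i ∉ H.verts
  hwv_nbr : ∀ i, wv i ∈ D.nbr (parent i)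
  W1 : Set V
  W2 : Set V
  hW_union : W1 ∪ W2 = Set.range wv
  hW_disj : Disjoint W1 W2
  hW1_stable : ∀ x ∈ W1, ∀ y ∈ W1, ¬ D.graph.Adj x y
  hW2_plus : W2 ⊆ D.Vplus
  hW2_edge : ∀ i, wv i ∈ W2 → D.E (wv i) (parent i)
  hW1_out : D.outNS (W2 ∪ ({x | x ∈ H.verts ∧ 2 ≤ H.deg x} ∪
      {x | (∃ i, parent i = x) ∧ H.deg x = 1})) ∩ W1 = ∅

/-- The set `H̃` associated with a `⋆`-semi-forest. -/
noncomputable def SSF.tilde {D : WOGraph V} {H : D.OSub} (F : D.SSF H) : Set V :=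
  {x | x ∈ H.verts ∧ 2 ≤ H.deg x} ∪ {x | (∃ i, F.parent i = x) ∧ H.deg x = 1}

/-- `K` has a generating `⋆`-semi-forest. -/
def HasGenSSF (D : WOGraph V) (K : D.OSub) : Prop :=
  ∃ H : D.OSub, Nonempty (D.SSF H) ∧ H.verts = K.verts

/-- The `⋆`-condition for a 5-tuple `(a', a, b, b', c)` written along an induced 5-cycle. -/
def StarCond (D : WOGraph V) (a' a b b' c : V) : Prop :=
  (D.E a' a ∧ D.w a' = 1) ∧
  (D.inN a ⊆ D.nbr c ∧ D.inN a ∩ D.Vplus ⊆ D.inN c) ∧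
  (D.nbr b' ⊆ D.nbr a' ∪ D.outN a ∧ D.inN b' ∩ D.Vplus ⊆ D.inN a')

/-- The `⋆`-property for an induced 5-cycle `z 0, z 1, z 2, z 3, z 4`. -/
def HasStarProp (D : WOGraph V) (z : Fin 5 → V) : Prop :=
  ∀ i : Fin 5,
    (D.E (z i) (z (i + 1)) ∧ 1 < D.w (z i) →
      StarCond D (z (i - 1)) (z i) (z (i + 1)) (z (i + 2)) (z (i + 3))) ∧
    (D.E (z (i + 1)) (z i) ∧ 1 < D.w (z (i + 1)) →
      StarCond D (z (i + 2)) (z (i + 1)) (z i) (z (i - 1)) (z (i - 2)))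

/-- The edge ideal `I(D)` of a weighted oriented graph in `k[x_v : v ∈ V]`. -/
noncomputable def edgeIdeal (k : Type) [Field k] (D : WOGraph V) : Ideal (MvPolynomial V k) :=
  Ideal.span {f | ∃ u v, D.E u v ∧ f = MvPolynomial.X u * MvPolynomial.X v ^ D.w v}

end WOGraph

/-! ## Generic graph notions -/

/-- A vertex cover of a simple graph. -/
def gVC {W : Type} (G : SimpleGraph W) (C : Set W) : Prop :=
  ∀ u v, G.Adj u v → u ∈ C ∨ v ∈ C

/-- The vertex cover number `τ(G)`. -/
noncomputable def tau {W : Type} (G : SimpleGraph W) : ℕ :=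
  sInf {n | ∃ C : Set W, gVC G C ∧ C.ncard = n}

/-- A stable (independent) set. -/
def Stable {W : Type} (G : SimpleGraph W) (S : Set W) : Prop :=
  ∀ x ∈ S, ∀ y ∈ S, ¬ G.Adj x y

/-- `G` is well-covered: all maximal stable sets have the same cardinality. -/
def WellCovered {W : Type} (G : SimpleGraph W) : Prop :=
  ∀ S T : Set W, Maximal (Stable G) S → Maximal (Stable G) T → S.ncard = T.ncard

/-- `e` is (the vertex set of) an edge of `G`. -/
def IsEdgeSet {W : Type} (G : SimpleGraph W) (e : Set W) : Prop :=
  ∃ u v, G.Adj u v ∧ e = {u, v}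

/-- An edge `e = {b, b'}` has the property (P). -/
def PropP {W : Type} (G : SimpleGraph W) (e : Set W) : Prop :=
  ∀ a b a' b', e = {b, b'} → G.Adj a b → G.Adj a' b' → a ∉ e → a' ∉ e → G.Adj a a'

/-- A matching of `G`, as a set of (vertex sets of) edges. -/
def IsMatchingSet {W : Type} (G : SimpleGraph W) (M : Set (Set W)) : Prop :=
  (∀ e ∈ M, IsEdgeSet G e) ∧ M.Pairwise Disjoint

/-- A perfect matching of `G`. -/
def IsPerfectMatchingSet {W : Type} (G : SimpleGraph W) (M : Set (Set W)) : Prop :=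
  IsMatchingSet G M ∧ ⋃₀ M = Set.univ

/-- The matching number `ν(G)`. -/
noncomputable def nu {W : Type} (G : SimpleGraph W) : ℕ :=
  sSup {n | ∃ M, IsMatchingSet G M ∧ M.ncard = n}

/-- The degree of a vertex. -/
noncomputable def gdeg {W : Type} (G : SimpleGraph W) (x : W) : ℕ := (G.neighborSet x).ncard

/-- `v` is a simplicial vertex: its closed neighbourhood is a clique. -/
def IsSimplicialVtx {W : Type} (G : SimpleGraph W) (v : W) : Prop :=
  G.IsClique (insert v (G.neighborSet v))

/-- The set `S_G` of (vertex sets of) simplexes of `G`. -/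
def SimplexSets {W : Type} (G : SimpleGraph W) : Set (Set W) :=
  {S | ∃ v, IsSimplicialVtx G v ∧ S = insert v (G.neighborSet v)}

/-- `G` is a simplicial graph. -/
def SimplicialGraph {W : Type} (G : SimpleGraph W) : Prop :=
  ∀ v, IsSimplicialVtx G v ∨ ∃ u, G.Adj v u ∧ IsSimplicialVtx G u

/-- The cycle graph on `ZMod n`. -/
def cycGraph (n : ℕ) : SimpleGraph (ZMod n) := SimpleGraph.fromRel (fun i j => j = i + 1)

/-- `G` is chordal: it has no induced cycles of length `≥ 4`. -/
def Chordal {W : Type} (G : SimpleGraph W) : Prop :=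
  ∀ n : ℕ, 4 ≤ n → ∀ A : Set W, IsEmpty (G.induce A ≃g cycGraph n)

/-- `G` has a cycle of length `k`. -/
def HasCycleLen {W : Type} (G : SimpleGraph W) (k : ℕ) : Prop :=
  ∃ (a : W) (p : G.Walk a a), p.IsCycle ∧ p.length = k

/-- `z 0, z 1, z 2, z 3, z 4` is an induced 5-cycle of `G`. -/
def IsInduced5Cycle {W : Type} (G : SimpleGraph W) (z : Fin 5 → W) : Prop :=
  Function.Injective z ∧ ∀ i j : Fin 5, G.Adj (z i) (z j) ↔ (j = i + 1 ∨ i = j + 1)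

/-- A basic 5-cycle: an induced 5-cycle without two adjacent vertices of degree `≥ 3`. -/
def IsBasic5Cycle {W : Type} (G : SimpleGraph W) (z : Fin 5 → W) : Prop :=
  IsInduced5Cycle G z ∧ ∀ i : Fin 5, ¬ (3 ≤ gdeg G (z i) ∧ 3 ≤ gdeg G (z (i + 1)))

/-- The set `C_G` of (vertex sets of) basic 5-cycles of `G`. -/
def Basic5Sets {W : Type} (G : SimpleGraph W) : Set (Set W) :=
  {A | ∃ z : Fin 5 → W, IsBasic5Cycle G z ∧ A = Set.range z}

/-- The clique number `ω(G)`. -/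
noncomputable def cliqueNum' {W : Type} (G : SimpleGraph W) : ℕ :=
  sSup {n | ∃ s : Set W, G.IsClique s ∧ s.ncard = n}

/-- `G` is a perfect graph. -/
def IsPerfectGraph {W : Type} (G : SimpleGraph W) : Prop :=
  ∀ A : Set W, (G.induce A).chromaticNumber = (cliqueNum' (G.induce A) : ℕ∞)

/-- A `τ`-reduction of `G` into the induced subgraphs on the `A i`. -/
noncomputable def TauReduction {W : Type} (G : SimpleGraph W) (s : ℕ) (A : Fin s → Set W) : Prop :=
  (∀ i j, i ≠ j → Disjoint (A i) (A j)) ∧ (⋃ i, A i) = Set.univ ∧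
  tau G = ∑ i, tau (G.induce (A i))

/-- `G` is an SCQ graph witnessed by the matching `Q`. -/
def IsSCQ {V : Type} (D : WOGraph V) (Q : Set (Set V)) : Prop :=
  (Q = ∅ ∨ (IsMatchingSet D.graph Q ∧ ∀ e ∈ Q, PropP D.graph e)) ∧
  (∀ A ∈ SimplexSets D.graph ∪ Basic5Sets D.graph ∪ Q,
    ∀ B ∈ SimplexSets D.graph ∪ Basic5Sets D.graph ∪ Q, A = B ∨ Disjoint A B) ∧
  ⋃₀ (SimplexSets D.graph ∪ Basic5Sets D.graph ∪ Q) = Set.univ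

/-- An ideal is unmixed if all its associated primes have the same height. -/
def IsUnmixed {R : Type} [CommRing R] (I : Ideal R) : Prop :=
  ∀ p q : Ideal R, p ∈ associatedPrimes R (R ⧸ I) → q ∈ associatedPrimes R (R ⧸ I) →
    ∀ (hp : p.IsPrime) (hq : q.IsPrime),
      Order.height (⟨p, hp⟩ : PrimeSpectrum R) = Order.height (⟨q, hq⟩ : PrimeSpectrum R)
/-! ## Concrete graphs -/

/-- The 7-cycle `C₇`. -/
def C7graph : SimpleGraph (ZMod 7) := cycGraph 7

/-- Vertices of `T₁₀`. -/
inductive T10V | v | a1 | a2 | a3 | b1 | b2 | b3 | c1 | c2 | c3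
deriving DecidableEq

instance instFintypeT10V : Fintype T10V :=
  Fintype.ofList ([.v, .a1, .a2, .a3, .b1, .b2, .b3, .c1, .c2, .c3] : List T10V) (by intro x; cases x <;> decide)

open T10V in
/-- The graph `T₁₀`. -/
def T10graph : SimpleGraph T10V := SimpleGraph.fromRel (fun x y =>
  (x, y) ∈ ([(v,a1), (v,a2), (v,a3), (a1,b1), (a2,b2), (a3,b3), (b1,c1), (b2,c2),
    (b3,c3), (c1,c2), (c2,c3), (c3,c1)] : List (T10V × T10V)))

/-- Vertices of `Q₁₃`. -/
inductive Q13V | a1 | a2 | b1 | b2 | c1 | c2 | d1 | d2 | g1 | g2 | h | h' | v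
deriving DecidableEq

instance instFintypeQ13V : Fintype Q13V :=
  Fintype.ofList ([.a1, .a2, .b1, .b2, .c1, .c2, .d1, .d2, .g1, .g2, .h, .h', .v] : List Q13V) (by intro x; cases x <;> decide)

open Q13V in
/-- The graph `Q₁₃`. -/
def Q13graph : SimpleGraph Q13V := SimpleGraph.fromRel (fun x y =>
  (x, y) ∈ ([(a1,a2), (a1,d1), (a2,d2), (d1,c1), (d1,g1), (d1,h), (d2,c2), (d2,g2),
    (d2,h), (g1,b1), (g1,h'), (g2,b2), (g2,h'), (b1,c2), (b2,c1), (h,v),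
    (h',v)] : List (Q13V × Q13V)))

/-- Vertices of `P₁₃`. -/
inductive P13V | a1 | a2 | a3 | a4 | b1 | b2 | b3 | b4 | c1 | c2 | d1 | d2 | v
deriving DecidableEq

instance instFintypeP13V : Fintype P13V :=
  Fintype.ofList ([.a1, .a2, .a3, .a4, .b1, .b2, .b3, .b4, .c1, .c2, .d1, .d2, .v] : List P13V) (by intro x; cases x <;> decide)

open P13V in
/-- The graph `P₁₃`. -/
def P13graph : SimpleGraph P13V := SimpleGraph.fromRel (fun x y =>
  (x, y) ∈ ([(a1,a2), (a1,b1), (a2,b2), (a3,a4), (a3,b3), (a4,b4), (b1,c1), (b2,c1),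
    (b3,c2), (b4,c2), (c1,c2), (d1,b1), (d1,b3), (d2,b2), (d2,b4), (v,d1),
    (v,d2)] : List (P13V × P13V)))

/-- Vertices of `P₁₄`. -/
inductive P14V | a1 | a2 | a3 | a4 | a5 | a6 | a7 | b1 | b2 | b3 | b4 | b5 | b6 | b7
deriving DecidableEq

instance instFintypeP14V : Fintype P14V :=
  Fintype.ofList ([.a1, .a2, .a3, .a4, .a5, .a6, .a7, .b1, .b2, .b3, .b4, .b5, .b6, .b7] : List P14V) (by intro x; cases x <;> decide)

open P14V in
/-- The graph `P₁₄`. -/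
def P14graph : SimpleGraph P14V := SimpleGraph.fromRel (fun x y =>
  (x, y) ∈ ([(a1,a2), (a2,a3), (a3,a4), (a4,a5), (a5,a6), (a6,a7), (a7,a1),
    (a1,b1), (a2,b2), (a3,b3), (a4,b4), (a5,b5), (a6,b6), (a7,b7),
    (b1,b3), (b2,b4), (b3,b5), (b4,b6), (b5,b7), (b6,b1), (b7,b2)] : List (P14V × P14V)))

/-- Vertices of `P₁₀`. -/
inductive P10V | a1 | a2 | b1 | b2 | c1 | c2 | d1 | d2 | g1 | g2
deriving DecidableEq

instance instFintypeP10V : Fintype P10V :=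
  Fintype.ofList ([.a1, .a2, .b1, .b2, .c1, .c2, .d1, .d2, .g1, .g2] : List P10V) (by intro x; cases x <;> decide)

open P10V in
/-- The graph `P₁₀`. -/
def P10graph : SimpleGraph P10V := SimpleGraph.fromRel (fun x y =>
  (x, y) ∈ ([(a1,b1), (b1,d2), (d2,d1), (d1,b2), (b2,a2), (a1,g1), (g1,d1), (g1,c1),
    (c1,c2), (c2,g2), (g2,a2), (d2,g2)] : List (P10V × P10V)))

open Fin.CommRing

open WOGraph

section StarProofHelpers

variable {V : Type}

lemma adj_iff (D : WOGraph V) (x y : V) :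
    D.graph.Adj x y ↔ x ≠ y ∧ (D.E x y ∨ D.E y x) := by
  simp [WOGraph.graph, SimpleGraph.fromRel_adj]

lemma adj_of_E {D : WOGraph V} {x y : V} (h : D.E x y) : D.graph.Adj x y :=
  (adj_iff D x y).mpr ⟨fun he => D.irrefl y (he ▸ h), Or.inl h⟩

lemma E_or_of_adj {D : WOGraph V} {x y : V} (h : D.graph.Adj x y) : D.E x y ∨ D.E y x :=
  ((adj_iff D x y).mp h).2

lemma heavy_has_in {D : WOGraph V} {x : V} (h : 1 < D.w x) : ∃ y, D.E y x := by
  by_contra hc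
  push_neg at hc
  have := D.source_one x hc
  omega

lemma mem_nbr_iff_adj (D : WOGraph V) (x y : V) : y ∈ D.nbr x ↔ D.graph.Adj x y := by
  rw [adj_iff]
  constructor
  · intro h
    refine ⟨?_, h⟩
    rintro rfl
    rcases h with h | h <;> exact D.irrefl x h
  · exact fun h => h.2

section Cycle

variable {D : WOGraph V} {z : Fin 5 → V}

lemma zne (hz : IsInduced5Cycle D.graph z) {i j : Fin 5} (h : i ≠ j) : z i ≠ z j :=
  fun he => h (hz.1 he)

lemma adjz' (hz : IsInduced5Cycle D.graph z) (i j : Fin 5) (h : j = i + 1 ∨ i = j + 1) :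
    D.graph.Adj (z i) (z j) := (hz.2 i j).mpr h

lemma Ez' (hz : IsInduced5Cycle D.graph z) (i j : Fin 5) (h : j = i + 1) :
    D.E (z i) (z j) ∨ D.E (z j) (z i) := E_or_of_adj (adjz' hz i j (Or.inl h))

lemma nEz (hz : IsInduced5Cycle D.graph z) {i j : Fin 5} (h : ¬(j = i + 1 ∨ i = j + 1)) :
    ¬ D.E (z i) (z j) := fun hE => h ((hz.2 i j).mp (adj_of_E hE))

lemma nbrSet_eq_pair [Fintype V] (hz : IsInduced5Cycle D.graph z) {i : Fin 5}
    (hd : gdeg D.graph (z i) ≤ 2) :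
    D.graph.neighborSet (z i) = {z (i - 1), z (i + 1)} := by
  have hne : z (i - 1) ≠ z (i + 1) := by
    refine zne hz ?_
    intro h
    have h2 : i + (-1) = i + 1 := by rw [← sub_eq_add_neg]; exact h
    exact absurd (add_left_cancel h2) (by decide)
  have hsub : {z (i - 1), z (i + 1)} ⊆ D.graph.neighborSet (z i) := by
    rintro y (rfl | rfl)
    · exact adjz' hz i (i - 1) (Or.inr (by ring))
    · exact adjz' hz i (i + 1) (Or.inl rfl)
  refine (Set.eq_of_subset_of_ncard_le hsub ?_ (Set.toFinite _)).symm
  rw [Set.ncard_pair hne]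
  exact hd

lemma in_nbr_pair' [Fintype V] (hz : IsInduced5Cycle D.graph z) (i a b : Fin 5)
    (ha : a = i - 1) (hb : b = i + 1) (hd : gdeg D.graph (z i) ≤ 2) {y : V}
    (h : D.E y (z i) ∨ D.E (z i) y) : y = z a ∨ y = z b := by
  subst ha; subst hb
  have hy : y ∈ D.graph.neighborSet (z i) := by
    rw [SimpleGraph.mem_neighborSet, adj_iff]
    refine ⟨?_, h.symm⟩
    rintro rfl
    rcases h with h | h <;> exact D.irrefl _ h
  rw [nbrSet_eq_pair hz hd] at hy
  exact hy

lemma three_le_gdeg [Fintype V] {G : SimpleGraph V} {x a b c : V} (hab : a ≠ b) (hac : a ≠ c)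
    (hbc : b ≠ c) (ha : G.Adj x a) (hb : G.Adj x b) (hc : G.Adj x c) : 3 ≤ gdeg G x := by
  have hsub : {a, b, c} ⊆ G.neighborSet x := by rintro y (rfl | rfl | rfl) <;> assumption
  have h3 : ({a, b, c} : Set V).ncard = 3 := by
    rw [Set.ncard_insert_of_notMem (by simp [hab, hac]), Set.ncard_pair hbc]
  calc (3:ℕ) = ({a, b, c} : Set V).ncard := h3.symm
    _ ≤ _ := Set.ncard_le_ncard hsub (Set.toFinite _)

end Cycle

section Transfer

variable {D : WOGraph V} {z : Fin 5 → V}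

lemma ind5_rot (hz : IsInduced5Cycle D.graph z) (k : Fin 5) :
    IsInduced5Cycle D.graph (fun j => z (j + k)) := by
  constructor
  · intro a b h
    exact add_right_cancel (hz.1 h)
  · intro i j
    rw [show (fun j => z (j + k)) i = z (i + k) from rfl,
      show (fun j => z (j + k)) j = z (j + k) from rfl,
      hz.2 (i + k) (j + k), show i + k + 1 = (i + 1) + k from by ring,
      show j + k + 1 = (j + 1) + k from by ring, add_left_inj, add_left_inj]

lemma ind5_refl (hz : IsInduced5Cycle D.graph z) (k : Fin 5) :
    IsInduced5Cycle D.graph (fun j => z (k - j)) := by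
  constructor
  · intro a b h
    have h2 : k - a = k - b := hz.1 h
    rw [← sub_sub_cancel k a, h2, sub_sub_cancel]
  · intro i j
    rw [show (fun j => z (k - j)) i = z (k - i) from rfl,
      show (fun j => z (k - j)) j = z (k - j) from rfl,
      hz.2 (k - i) (k - j), show k - i + 1 = k - (i - 1) from by ring,
      show k - j + 1 = k - (j - 1) from by ring, sub_right_inj, sub_right_inj]
    constructor
    · rintro (h | h)
      · right; rw [h]; ring
      · left; rw [h]; ring
    · rintro (h | h)
      · right; rw [h]; ring
      · left; rw [h]; ring

lemma basic_rot (hb : IsBasic5Cycle D.graph z) (k : Fin 5) :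
    IsBasic5Cycle D.graph (fun j => z (j + k)) := by
  refine ⟨ind5_rot hb.1 k, ?_⟩
  intro i
  have h := hb.2 (i + k)
  rw [show (i + k) + 1 = (i + 1) + k from by ring] at h
  exact h

lemma basic_refl (hb : IsBasic5Cycle D.graph z) (k : Fin 5) :
    IsBasic5Cycle D.graph (fun j => z (k - j)) := by
  refine ⟨ind5_refl hb.1 k, ?_⟩
  intro i
  have h := hb.2 (k - i - 1)
  rw [show k - i - 1 + 1 = k - i from by ring] at h
  show ¬(3 ≤ gdeg D.graph (z (k - i)) ∧ 3 ≤ gdeg D.graph (z (k - (i + 1))))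
  rw [show k - (i + 1) = k - i - 1 from by ring]
  tauto

lemma star_rot (h : D.HasStarProp z) (k : Fin 5) : D.HasStarProp (fun j => z (j + k)) := by
  intro i
  constructor
  · intro hh
    have h1 := (h (i + k)).1
    rw [show (i + k) + 1 = (i + 1) + k from by ring] at h1
    have hs := h1 ⟨hh.1, hh.2⟩
    rw [show (i + k) - 1 = (i - 1) + k from by ring, show (i + k) + 2 = (i + 2) + k from by ring,
      show (i + k) + 3 = (i + 3) + k from by ring] at hs
    exact hs
  · intro hh
    have h2 := (h (i + k)).2
    rw [show (i + k) + 1 = (i + 1) + k from by ring] at h2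
    have hs := h2 ⟨hh.1, hh.2⟩
    rw [show (i + k) + 2 = (i + 2) + k from by ring, show (i + k) - 1 = (i - 1) + k from by ring,
      show (i + k) - 2 = (i - 2) + k from by ring] at hs
    exact hs

lemma star_refl (h : D.HasStarProp z) (k : Fin 5) : D.HasStarProp (fun j => z (k - j)) := by
  intro i
  constructor
  · intro hh
    have h2 := (h (k - i - 1)).2
    rw [show k - i - 1 + 1 = k - i from by ring] at h2
    have hh1 : D.E (z (k - i)) (z (k - i - 1)) := by
      have := hh.1
      rw [show (fun j => z (k - j)) i = z (k - i) from rfl,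
        show (fun j => z (k - j)) (i + 1) = z (k - (i + 1)) from rfl,
        show k - (i + 1) = k - i - 1 from by ring] at this
      exact this
    have hs := h2 ⟨hh1, hh.2⟩
    show StarCond D (z (k - (i - 1))) (z (k - i)) (z (k - (i + 1))) (z (k - (i + 2)))
      (z (k - (i + 3)))
    rw [show k - (i - 1) = k - i - 1 + 2 from by ring, show k - (i + 1) = k - i - 1 from by ring,
      show k - (i + 2) = k - i - 1 - 1 from by ring, show k - (i + 3) = k - i - 1 - 2 from by ring]
    exact hs
  · intro hh
    have h1 := (h (k - i - 1)).1
    rw [show k - i - 1 + 1 = k - i from by ring] at h1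
    have hh1 : D.E (z (k - i - 1)) (z (k - i)) := by
      have := hh.1
      rw [show (fun j => z (k - j)) (i + 1) = z (k - (i + 1)) from rfl,
        show (fun j => z (k - j)) i = z (k - i) from rfl,
        show k - (i + 1) = k - i - 1 from by ring] at this
      exact this
    have hw1 : 1 < D.w (z (k - i - 1)) := by
      have := hh.2
      rw [show (fun j => z (k - j)) (i + 1) = z (k - (i + 1)) from rfl,
        show k - (i + 1) = k - i - 1 from by ring] at this
      exact this
    have hs := h1 ⟨hh1, hw1⟩
    show StarCond D (z (k - (i + 2))) (z (k - (i + 1))) (z (k - i)) (z (k - (i - 1)))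
      (z (k - (i - 2)))
    rw [show k - (i + 2) = k - i - 1 - 1 from by ring, show k - (i + 1) = k - i - 1 from by ring,
      show k - (i - 1) = k - i - 1 + 2 from by ring, show k - (i - 2) = k - i - 1 + 3 from by ring]
    exact hs

lemma range_rot (z : Fin 5 → V) (k : Fin 5) :
    Set.range (fun j => z (j + k)) = Set.range z := by
  ext x
  constructor
  · rintro ⟨j, rfl⟩; exact ⟨j + k, rfl⟩
  · rintro ⟨j, rfl⟩; exact ⟨j - k, by rw [show (fun j => z (j + k)) (j - k) = z (j - k + k) from rfl, sub_add_cancel]⟩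

lemma range_refl (z : Fin 5 → V) (k : Fin 5) :
    Set.range (fun j => z (k - j)) = Set.range z := by
  ext x
  constructor
  · rintro ⟨j, rfl⟩; exact ⟨k - j, rfl⟩
  · rintro ⟨j, rfl⟩; exact ⟨k - j, by rw [show (fun j => z (k - j)) (k - j) = z (k - (k - j)) from rfl, sub_sub_cancel]⟩

end Transfer

end StarProofHelpers

section Machinery

variable {V : Type}

lemma exists_indep [Fintype V] (D : WOGraph V) (A P : Set V)
    (hPind : ∀ x ∈ P, ∀ y ∈ P, ¬ D.graph.Adj x y) (hPA : ∀ x ∈ P, x ∉ A) :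
    ∃ S : Set V, P ⊆ S ∧ (∀ x ∈ S, x ∉ A) ∧ (∀ x ∈ S, ∀ y ∈ S, ¬ D.graph.Adj x y) ∧
      (∀ x, x ∉ A → x ∉ S → ∃ s ∈ S, D.graph.Adj x s) := by
  classical
  set T : Set (Set V) :=
    {S | P ⊆ S ∧ (∀ x ∈ S, x ∉ A) ∧ ∀ x ∈ S, ∀ y ∈ S, ¬ D.graph.Adj x y} with hT
  have hPT : P ∈ T := ⟨subset_rfl, hPA, hPind⟩
  obtain ⟨S, hST, hSmax⟩ :=
    Set.Finite.exists_maximalFor Set.ncard T (Set.toFinite T) ⟨P, hPT⟩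
  refine ⟨S, hST.1, hST.2.1, hST.2.2, ?_⟩
  intro x hxA hxS
  by_contra hno
  push_neg at hno
  have hins : insert x S ∈ T := by
    refine ⟨hST.1.trans (Set.subset_insert _ _), ?_, ?_⟩
    · rintro y (rfl | hy)
      · exact hxA
      · exact hST.2.1 y hy
    · rintro a (rfl | ha) b (rfl | hb)
      · exact D.graph.loopless.irrefl _
      · exact hno b hb
      · exact fun h => hno a ha h.symm
      · exact hST.2.2 a ha b hb
  have hle : S.ncard ≤ (insert x S).ncard :=
    Set.ncard_le_ncard (Set.subset_insert _ _) (Set.toFinite _)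
  have heq := hSmax hins hle
  rw [Set.ncard_insert_of_notMem hxS (Set.toFinite _)] at heq
  omega

lemma strong_of (D : WOGraph V) (A S : Set V)
    (hSA : ∀ x ∈ S, x ∉ A)
    (hind : ∀ x ∈ S, ∀ y ∈ S, ¬ D.graph.Adj x y)
    (hdom : ∀ x, x ∉ A → x ∉ S → ∃ s ∈ S, D.graph.Adj x s)
    (hwit : ∀ x ∈ A, (∀ y, (D.E x y ∨ D.E y x) → y ∉ S) →
      ∃ y, D.E y x ∧ (∀ t, D.E y t → t ∉ S) ∧ 1 < D.w y) :
    D.IsStrongVC Sᶜ := by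
  constructor
  · intro u v hE
    by_contra hc
    push_neg at hc
    rw [Set.notMem_compl_iff] at hc
    exact hind u hc.1 v (Set.notMem_compl_iff.mp hc.2) (adj_of_E hE)
  · intro x hx
    obtain ⟨hxC, hxL1, hxL2⟩ := hx
    have hnb : ∀ y, (D.E x y ∨ D.E y x) → y ∉ S := by
      rintro y (h | h) hyS
      · exact hxL1 ⟨hxC, y, h, fun hc => hc hyS⟩
      · exact hxL2 ⟨hxC, hxL1, y, h, fun hc => hc hyS⟩
    have hxS : x ∉ S := hxC
    have hxA : x ∈ A := by
      by_contra hA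
      obtain ⟨s, hsS, hadj⟩ := hdom x hA hxS
      exact hnb s (E_or_of_adj hadj) hsS
    obtain ⟨y, hEy, hyout, hyw⟩ := hwit x hxA hnb
    refine ⟨y, hEy, hnb y (Or.inr hEy), ?_, hyw⟩
    rintro ⟨hyC, t, hEt, htC⟩
    exact hyout t hEt (not_not.mp htC)

lemma ncard_ne_three [Fintype V] {z : Fin 5 → V} (hinj : Function.Injective z) (S : Set V)
    (m : Fin 5) (h : ∀ j, j ≠ m → z j ∉ S) : (Sᶜ ∩ Set.range z).ncard ≠ 3 := by
  have hzne : ∀ a b : Fin 5, a ≠ b → z (m + a) ≠ z (m + b) := by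
    intro a b hab he
    exact hab (add_left_cancel (hinj he))
  have hmem : ∀ c : Fin 5, c ≠ 0 → z (m + c) ∈ Sᶜ ∩ Set.range z := by
    intro c hc
    refine ⟨h _ ?_, ⟨m + c, rfl⟩⟩
    intro hh
    exact hc (by
      have : m + c = m + 0 := by rw [hh, add_zero]
      exact add_left_cancel this)
  have hsub : ({z (m+1), z (m+2), z (m+3), z (m+4)} : Set V) ⊆ Sᶜ ∩ Set.range z := by
    rintro y (rfl | rfl | rfl | rfl) <;> exact hmem _ (by decide)
  have hc4 : ({z (m+1), z (m+2), z (m+3), z (m+4)} : Set V).ncard = 4 := by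
    rw [Set.ncard_insert_of_notMem
        (by simp [hzne 1 2 (by decide), hzne 1 3 (by decide), hzne 1 4 (by decide)]),
      Set.ncard_insert_of_notMem
        (by simp [hzne 2 3 (by decide), hzne 2 4 (by decide)]),
      Set.ncard_pair (hzne 3 4 (by decide))]
  intro h3
  have := Set.ncard_le_ncard hsub (Set.toFinite _)
  rw [hc4, h3] at this
  omega

lemma construct [Fintype V] {D : WOGraph V} {z : Fin 5 → V}
    (hinj : Function.Injective z)
    (H3 : ∀ C, D.IsStrongVC C → (C ∩ Set.range z).ncard = 3)
    (A P : Set V) (m : Fin 5)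
    (hPind : ∀ x ∈ P, ∀ y ∈ P, ¬ D.graph.Adj x y)
    (hPA : ∀ x ∈ P, x ∉ A)
    (hcyc : ∀ j, j ≠ m → z j ∈ A)
    (hwit : ∀ S : Set V, P ⊆ S → (∀ x ∈ S, x ∉ A) →
      ∀ x ∈ A, (∀ y, (D.E x y ∨ D.E y x) → y ∉ S) →
        ∃ y, D.E y x ∧ (∀ t, D.E y t → t ∉ S) ∧ 1 < D.w y) : False := by
  obtain ⟨S, hPS, hSA, hind, hdom⟩ := exists_indep D A P hPind hPA
  have hstrong := strong_of D A S hSA hind hdom (hwit S hPS hSA)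
  exact ncard_ne_three hinj S m (fun j hj hmem => hSA _ hmem (hcyc j hj)) (H3 _ hstrong)

end Machinery

section Forward

variable {V : Type}

lemma mem_L1_iff (D : WOGraph V) (C : Set V) (x : V) :
    x ∈ D.L1 C ↔ x ∈ C ∧ ∃ y, D.E x y ∧ y ∉ C := Iff.rfl

lemma mem_L2_iff (D : WOGraph V) (C : Set V) (x : V) :
    x ∈ D.L2 C ↔ x ∈ C ∧ x ∉ D.L1 C ∧ ∃ y, D.E y x ∧ y ∉ C := Iff.rfl

lemma mem_L3_iff (D : WOGraph V) (C : Set V) (x : V) :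
    x ∈ D.L3 C ↔ x ∈ C ∧ x ∉ D.L1 C ∧ x ∉ D.L2 C := Iff.rfl

lemma lemD1 [Fintype V] {D : WOGraph V} {z : Fin 5 → V} {C : Set V}
    (hz : IsInduced5Cycle D.graph z) (hstar : D.HasStarProp z)
    (hC : D.IsStrongVC C) (hall : ∀ j, z j ∈ C)
    (hd0 : gdeg D.graph (z 0) ≤ 2) (hd1 : gdeg D.graph (z 1) ≤ 2) : False := by
  have hL3 : ∀ i : Fin 5, gdeg D.graph (z i) ≤ 2 → z i ∈ D.L3 C := by
    intro i hd
    rw [mem_L3_iff]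
    refine ⟨hall i, ?_, ?_⟩
    · rw [mem_L1_iff]
      rintro ⟨-, y, hEy, hyC⟩
      rcases in_nbr_pair' hz i (i-1) (i+1) rfl rfl hd (Or.inr hEy) with rfl | rfl <;>
        exact hyC (hall _)
    · rw [mem_L2_iff]
      rintro ⟨-, -, y, hEy, hyC⟩
      rcases in_nbr_pair' hz i (i-1) (i+1) rfl rfl hd (Or.inl hEy) with rfl | rfl <;>
        exact hyC (hall _)
  obtain ⟨y, hEy, hyC, hyL1, hyw⟩ := hC.2 _ (hL3 0 hd0)
  obtain ⟨y', hEy', hy'C, hy'L1, hy'w⟩ := hC.2 _ (hL3 1 hd1)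
  have hy := in_nbr_pair' hz 0 4 1 (by decide) (by decide) hd0 (Or.inl hEy)
  have hy' := in_nbr_pair' hz 1 0 2 (by decide) (by decide) hd1 (Or.inl hEy')
  rcases hy with rfl | rfl
  · -- y = z 4
    rcases hy' with rfl | rfl
    · -- y' = z 0
      have h0c1 := (hstar 0).1
      rw [show ((0:Fin 5)+1) = 1 from by decide, show ((0:Fin 5)-1) = 4 from by decide,
        show ((0:Fin 5)+2) = 2 from by decide, show ((0:Fin 5)+3) = 3 from by decide] at h0c1
      have hS := h0c1 ⟨hEy', hy'w⟩
      have := hS.1.2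
      omega
    · -- y' = z 2
      have h4c1 := (hstar 4).1
      rw [show ((4:Fin 5)+1) = 0 from by decide, show ((4:Fin 5)-1) = 3 from by decide,
        show ((4:Fin 5)+2) = 1 from by decide, show ((4:Fin 5)+3) = 2 from by decide] at h4c1
      have hS := h4c1 ⟨hEy, hyw⟩
      have hE23 : D.E (z 2) (z 3) := hS.2.2.2 ⟨hEy', hy'w⟩
      have h1c2 := (hstar 1).2
      rw [show ((1:Fin 5)+1) = 2 from by decide, show ((1:Fin 5)+2) = 3 from by decide,
        show ((1:Fin 5)-1) = 0 from by decide, show ((1:Fin 5)-2) = 4 from by decide] at h1c2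
      have hS2 := h1c2 ⟨hEy', hy'w⟩
      exact D.asymm _ _ hE23 hS2.1.1
  · -- y = z 1
    have h0c2 := (hstar 0).2
    rw [show ((0:Fin 5)+1) = 1 from by decide, show ((0:Fin 5)+2) = 2 from by decide,
      show ((0:Fin 5)-1) = 4 from by decide, show ((0:Fin 5)-2) = 3 from by decide] at h0c2
    have hS := h0c2 ⟨hEy, hyw⟩
    rcases hy' with rfl | rfl
    · exact D.asymm _ _ hEy hEy'
    · have := hS.1.2
      omega

lemma lemSL [Fintype V] {D : WOGraph V} {z : Fin 5 → V} {C : Set V}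
    (hz : IsInduced5Cycle D.graph z) (hstar : D.HasStarProp z)
    (hC : D.IsStrongVC C) (h0 : z 0 ∉ C) (hrest : ∀ j, j ≠ 0 → z j ∈ C)
    (hd3 : gdeg D.graph (z 3) ≤ 2) : False := by
  have hz3L3 : z 3 ∈ D.L3 C := by
    rw [mem_L3_iff]
    refine ⟨hrest 3 (by decide), ?_, ?_⟩
    · rw [mem_L1_iff]
      rintro ⟨-, y, hEy, hyC⟩
      rcases in_nbr_pair' hz 3 2 4 (by decide) (by decide) hd3 (Or.inr hEy) with rfl | rfl
      · exact hyC (hrest 2 (by decide))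
      · exact hyC (hrest 4 (by decide))
    · rw [mem_L2_iff]
      rintro ⟨-, -, y, hEy, hyC⟩
      rcases in_nbr_pair' hz 3 2 4 (by decide) (by decide) hd3 (Or.inl hEy) with rfl | rfl
      · exact hyC (hrest 2 (by decide))
      · exact hyC (hrest 4 (by decide))
  obtain ⟨y, hEy, hyC, hyL1, hyw⟩ := hC.2 _ hz3L3
  rcases in_nbr_pair' hz 3 2 4 (by decide) (by decide) hd3 (Or.inl hEy) with rfl | rfl
  · -- y = z 2
    have h2c1 := (hstar 2).1
    rw [show ((2:Fin 5)+1) = 3 from by decide, show ((2:Fin 5)-1) = 1 from by decide,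
      show ((2:Fin 5)+2) = 4 from by decide, show ((2:Fin 5)+3) = 0 from by decide] at h2c1
    have hS := h2c1 ⟨hEy, hyw⟩
    by_cases hex : ∃ v, D.E v (z 2) ∧ v ∉ C
    · obtain ⟨v, hvE, hvC⟩ := hex
      have hvnbr : D.E (z 0) v ∨ D.E v (z 0) := hS.2.1.1 hvE
      rcases hvnbr with h | h
      · exact hvC ((hC.1 _ _ h).resolve_left h0)
      · rcases hC.1 _ _ h with h' | h'
        · exact hvC h'
        · exact h0 h'
    · have hz2L3 : z 2 ∈ D.L3 C := by
        rw [mem_L3_iff]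
        refine ⟨hrest 2 (by decide), hyL1, ?_⟩
        rw [mem_L2_iff]
        rintro ⟨-, -, v, hv, hvC⟩
        exact hex ⟨v, hv, hvC⟩
      obtain ⟨y₂, hE2, hy2C, hy2L1, hy2w⟩ := hC.2 _ hz2L3
      have hE20 : D.E y₂ (z 0) := hS.2.1.2 ⟨hE2, hy2w⟩
      exact hy2L1 ((mem_L1_iff D C y₂).mpr ⟨hy2C, z 0, hE20, h0⟩)
  · -- y = z 4
    have h3c2 := (hstar 3).2
    rw [show ((3:Fin 5)+1) = 4 from by decide, show ((3:Fin 5)+2) = 0 from by decide,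
      show ((3:Fin 5)-1) = 2 from by decide, show ((3:Fin 5)-2) = 1 from by decide] at h3c2
    have hS := h3c2 ⟨hEy, hyw⟩
    have hallnbr : ∀ v, (D.E (z 2) v ∨ D.E v (z 2)) → v ∈ C := by
      intro v hv
      have hv2 : (D.E (z 0) v ∨ D.E v (z 0)) ∨ D.E (z 4) v := hS.2.2.1 hv
      rcases hv2 with (h | h) | h
      · exact (hC.1 _ _ h).resolve_left h0
      · rcases hC.1 _ _ h with h' | h'
        · exact h'
        · exact absurd h' h0
      · by_contra hvC
        exact hyL1 ((mem_L1_iff D C (z 4)).mpr ⟨hyC, v, h, hvC⟩)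
    have hz2L3 : z 2 ∈ D.L3 C := by
      rw [mem_L3_iff]
      refine ⟨hrest 2 (by decide), ?_, ?_⟩
      · rw [mem_L1_iff]
        rintro ⟨-, t, ht, htC⟩
        exact htC (hallnbr t (Or.inl ht))
      · rw [mem_L2_iff]
        rintro ⟨-, -, t, ht, htC⟩
        exact htC (hallnbr t (Or.inr ht))
    obtain ⟨y₂, hE2, hy2C, hy2L1, hy2w⟩ := hC.2 _ hz2L3
    have hE20 : D.E y₂ (z 0) := hS.2.2.2 ⟨hE2, hy2w⟩
    exact hy2L1 ((mem_L1_iff D C y₂).mpr ⟨hy2C, z 0, hE20, h0⟩)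

end Forward

section Backward

variable {V : Type} [Fintype V]

lemma CL {D : WOGraph V} {z : Fin 5 → V}
    (hb : IsBasic5Cycle D.graph z)
    (hE12 : D.E (z 1) (z 2)) (hw1 : 1 < D.w (z 1))
    (hns : ¬ StarCond D (z 0) (z 1) (z 2) (z 3) (z 4))
    (H3 : ∀ C, D.IsStrongVC C → (C ∩ Set.range z).ncard = 3) : False := by
  obtain ⟨hz, hbasic⟩ := hb
  have hinj : Function.Injective z := hz.1
  have hzne : ∀ i j : Fin 5, i ≠ j → z i ≠ z j := fun i j h => zne hz h
  have hnE : ∀ i j : Fin 5, ¬(j = i + 1 ∨ i = j + 1) → ¬ D.E (z i) (z j) :=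
    fun i j h => nEz hz h
  simp only [WOGraph.StarCond] at hns
  by_cases h1 : D.E (z 0) (z 1) ∧ D.w (z 0) = 1
  · -- ⋆1 holds
    obtain ⟨hE01, hw0⟩ := h1
    by_cases hP2 : D.inN (z 1) ⊆ D.nbr (z 4) ∧ D.inN (z 1) ∩ D.Vplus ⊆ D.inN (z 4)
    · by_cases hP3a : D.nbr (z 3) ⊆ D.nbr (z 0) ∪ D.outN (z 1)
      · -- F3b
        have hP3b : ¬(D.inN (z 3) ∩ D.Vplus ⊆ D.inN (z 0)) :=
          fun hh => hns ⟨⟨hE01, hw0⟩, hP2, hP3a, hh⟩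
        obtain ⟨u, hu, hun⟩ := Set.not_subset.mp hP3b
        have hu' : D.E u (z 3) ∧ 1 < D.w u := hu
        have huE : D.E u (z 3) := hu'.1
        have huw : 1 < D.w u := hu'.2
        have hun0 : ¬ D.E u (z 0) := hun
        refine construct hinj H3 (D.outN (z 1) ∪ (D.outN u ∪ {z 1, z 3, z 4})) {z 0} 0
          ?_ ?_ ?_ ?_
        · intro x hx y hy
          rw [Set.mem_singleton_iff] at hx hy
          subst hx; subst hy
          exact D.graph.loopless.irrefl _
        · intro x hx
          rw [Set.mem_singleton_iff] at hx
          subst hx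
          rintro (h | h | h)
          · exact D.asymm _ _ hE01 h
          · exact hun0 h
          · rcases h with h | h | h
            exacts [hzne 0 1 (by decide) h, hzne 0 3 (by decide) h, hzne 0 4 (by decide) h]
        · intro j hj
          rcases (by decide : ∀ j : Fin 5, j ≠ (0:Fin 5) → j = 1 ∨ j = 2 ∨ j = 3 ∨ j = 4) j hj
            with rfl | rfl | rfl | rfl
          · exact Set.mem_union_right _ (Set.mem_union_right _ (by simp))
          · exact Set.mem_union_left _ hE12
          · exact Set.mem_union_right _ (Set.mem_union_right _ (by simp))
          · exact Set.mem_union_right _ (Set.mem_union_right _ (by simp))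
        · intro S hPS hSA x hxA hno
          have hz0S : z 0 ∈ S := hPS rfl
          rcases hxA with hx | hx | hx
          · exact ⟨z 1, hx, fun t ht hts => hSA t hts (Set.mem_union_left _ ht), hw1⟩
          · exact ⟨u, hx, fun t ht hts =>
              hSA t hts (Set.mem_union_right _ (Set.mem_union_left _ ht)), huw⟩
          · rcases hx with rfl | rfl | rfl
            · exact absurd hz0S (hno (z 0) (Or.inr hE01))
            · exact ⟨u, huE, fun t ht hts =>
                hSA t hts (Set.mem_union_right _ (Set.mem_union_left _ ht)), huw⟩
            · rcases Ez' hz 4 0 (by decide) with h | h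
              · exact absurd hz0S (hno (z 0) (Or.inl h))
              · exact absurd hz0S (hno (z 0) (Or.inr h))
      · -- F3a
        obtain ⟨u, hu3, hun⟩ := Set.not_subset.mp hP3a
        have hu3' : D.E (z 3) u ∨ D.E u (z 3) := hu3
        have hun0 : ¬(D.E (z 0) u ∨ D.E u (z 0)) := fun hh => hun (Set.mem_union_left _ hh)
        have hnE1u : ¬ D.E (z 1) u := fun hh => hun (Set.mem_union_right _ hh)
        have hu1 : u ≠ z 1 := by
          rintro rfl
          rcases hu3' with h | h
          exacts [hnE 3 1 (by decide) h, hnE 1 3 (by decide) h]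
        have hu3ne : u ≠ z 3 := by
          rintro rfl
          rcases hu3' with h | h <;> exact D.irrefl _ h
        have hu0 : u ≠ z 0 := by
          rintro rfl
          rcases hu3' with h | h
          exacts [hnE 3 0 (by decide) h, hnE 0 3 (by decide) h]
        have hu4 : u ≠ z 4 := by
          rintro rfl
          rcases Ez' hz 4 0 (by decide) with h | h
          exacts [hun0 (Or.inr h), hun0 (Or.inl h)]
        have hadj0u : ¬ D.graph.Adj (z 0) u := fun h => hun0 (E_or_of_adj h)
        refine construct hinj H3 (D.outN (z 1) ∪ {z 1, z 3, z 4}) {z 0, u} 0 ?_ ?_ ?_ ?_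
        · intro x hx y hy
          simp only [Set.mem_insert_iff, Set.mem_singleton_iff] at hx hy
          rcases hx with rfl | rfl <;> rcases hy with rfl | rfl
          · exact D.graph.loopless.irrefl _
          · exact hadj0u
          · exact fun h => hadj0u h.symm
          · exact D.graph.loopless.irrefl _
        · intro x hx
          simp only [Set.mem_insert_iff, Set.mem_singleton_iff] at hx
          rcases hx with rfl | rfl
          · rintro (h | h)
            · exact D.asymm _ _ hE01 h
            · rcases h with h | h | h
              exacts [hzne 0 1 (by decide) h, hzne 0 3 (by decide) h, hzne 0 4 (by decide) h]
          · rintro (h | h)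
            · exact hnE1u h
            · rcases h with h | h | h
              exacts [hu1 h, hu3ne h, hu4 h]
        · intro j hj
          rcases (by decide : ∀ j : Fin 5, j ≠ (0:Fin 5) → j = 1 ∨ j = 2 ∨ j = 3 ∨ j = 4) j hj
            with rfl | rfl | rfl | rfl
          · exact Set.mem_union_right _ (by simp)
          · exact Set.mem_union_left _ hE12
          · exact Set.mem_union_right _ (by simp)
          · exact Set.mem_union_right _ (by simp)
        · intro S hPS hSA x hxA hno
          have hz0S : z 0 ∈ S := hPS (by simp)
          have huS : u ∈ S := hPS (by simp)
          rcases hxA with hx | hx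
          · exact ⟨z 1, hx, fun t ht hts => hSA t hts (Set.mem_union_left _ ht), hw1⟩
          · rcases hx with rfl | rfl | rfl
            · exact absurd hz0S (hno (z 0) (Or.inr hE01))
            · exact absurd huS (hno u hu3')
            · rcases Ez' hz 4 0 (by decide) with h | h
              · exact absurd hz0S (hno (z 0) (Or.inl h))
              · exact absurd hz0S (hno (z 0) (Or.inr h))
    · -- ⋆2 fails
      by_cases hP2a : D.inN (z 1) ⊆ D.nbr (z 4)
      · -- F2b
        have hP2b : ¬(D.inN (z 1) ∩ D.Vplus ⊆ D.inN (z 4)) := fun hh => hP2 ⟨hP2a, hh⟩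
        obtain ⟨u, hu, hun⟩ := Set.not_subset.mp hP2b
        have hu' : D.E u (z 1) ∧ 1 < D.w u := hu
        have huE : D.E u (z 1) := hu'.1
        have huw : 1 < D.w u := hu'.2
        have hun4 : ¬ D.E u (z 4) := hun
        refine construct hinj H3 (D.outN (z 1) ∪ (D.outN u ∪ {z 0, z 1, z 3})) {z 4} 4
          ?_ ?_ ?_ ?_
        · intro x hx y hy
          rw [Set.mem_singleton_iff] at hx hy
          subst hx; subst hy
          exact D.graph.loopless.irrefl _
        · intro x hx
          rw [Set.mem_singleton_iff] at hx
          subst hx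
          rintro (h | h | h)
          · exact hnE 1 4 (by decide) h
          · exact hun4 h
          · rcases h with h | h | h
            exacts [hzne 4 0 (by decide) h, hzne 4 1 (by decide) h, hzne 4 3 (by decide) h]
        · intro j hj
          rcases (by decide : ∀ j : Fin 5, j ≠ (4:Fin 5) → j = 0 ∨ j = 1 ∨ j = 2 ∨ j = 3) j hj
            with rfl | rfl | rfl | rfl
          · exact Set.mem_union_right _ (Set.mem_union_right _ (by simp))
          · exact Set.mem_union_right _ (Set.mem_union_right _ (by simp))
          · exact Set.mem_union_left _ hE12
          · exact Set.mem_union_right _ (Set.mem_union_right _ (by simp))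
        · intro S hPS hSA x hxA hno
          have hz4S : z 4 ∈ S := hPS rfl
          rcases hxA with hx | hx | hx
          · exact ⟨z 1, hx, fun t ht hts => hSA t hts (Set.mem_union_left _ ht), hw1⟩
          · exact ⟨u, hx, fun t ht hts =>
              hSA t hts (Set.mem_union_right _ (Set.mem_union_left _ ht)), huw⟩
          · rcases hx with rfl | rfl | rfl
            · rcases Ez' hz 4 0 (by decide) with h | h
              · exact absurd hz4S (hno (z 4) (Or.inr h))
              · exact absurd hz4S (hno (z 4) (Or.inl h))
            · exact ⟨u, huE, fun t ht hts =>
                hSA t hts (Set.mem_union_right _ (Set.mem_union_left _ ht)), huw⟩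
            · rcases Ez' hz 3 4 (by decide) with h | h
              · exact absurd hz4S (hno (z 4) (Or.inl h))
              · exact absurd hz4S (hno (z 4) (Or.inr h))
      · -- F2a
        obtain ⟨u, hu, hun⟩ := Set.not_subset.mp hP2a
        have huE : D.E u (z 1) := hu
        have hun4 : ¬(D.E (z 4) u ∨ D.E u (z 4)) := hun
        have hu0 : u ≠ z 0 := by
          rintro rfl
          rcases Ez' hz 4 0 (by decide) with h | h
          exacts [hun4 (Or.inl h), hun4 (Or.inr h)]
        have hu1 : u ≠ z 1 := fun he => D.irrefl _ (he ▸ huE)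
        have hu2 : u ≠ z 2 := fun he => D.asymm _ _ hE12 (he ▸ huE)
        have hu3 : u ≠ z 3 := fun he => hnE 3 1 (by decide) (he ▸ huE)
        have hadj4u : ¬ D.graph.Adj (z 4) u := fun h => hun4 (E_or_of_adj h)
        refine construct hinj H3 (D.outN (z 1) ∪ {z 0, z 1, z 3}) {z 4, u} 4 ?_ ?_ ?_ ?_
        · intro x hx y hy
          simp only [Set.mem_insert_iff, Set.mem_singleton_iff] at hx hy
          rcases hx with rfl | rfl <;> rcases hy with rfl | rfl
          · exact D.graph.loopless.irrefl _
          · exact hadj4u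
          · exact fun h => hadj4u h.symm
          · exact D.graph.loopless.irrefl _
        · intro x hx
          simp only [Set.mem_insert_iff, Set.mem_singleton_iff] at hx
          rcases hx with rfl | rfl
          · rintro (h | h)
            · exact hnE 1 4 (by decide) h
            · rcases h with h | h | h
              exacts [hzne 4 0 (by decide) h, hzne 4 1 (by decide) h, hzne 4 3 (by decide) h]
          · rintro (h | h)
            · exact D.asymm _ _ huE h
            · rcases h with h | h | h
              exacts [hu0 h, hu1 h, hu3 h]
        · intro j hj
          rcases (by decide : ∀ j : Fin 5, j ≠ (4:Fin 5) → j = 0 ∨ j = 1 ∨ j = 2 ∨ j = 3) j hj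
            with rfl | rfl | rfl | rfl
          · exact Set.mem_union_right _ (by simp)
          · exact Set.mem_union_right _ (by simp)
          · exact Set.mem_union_left _ hE12
          · exact Set.mem_union_right _ (by simp)
        · intro S hPS hSA x hxA hno
          have hz4S : z 4 ∈ S := hPS (by simp)
          have huS : u ∈ S := hPS (by simp)
          rcases hxA with hx | hx
          · exact ⟨z 1, hx, fun t ht hts => hSA t hts (Set.mem_union_left _ ht), hw1⟩
          · rcases hx with rfl | rfl | rfl
            · rcases Ez' hz 4 0 (by decide) with h | h
              · exact absurd hz4S (hno (z 4) (Or.inr h))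
              · exact absurd hz4S (hno (z 4) (Or.inl h))
            · exact absurd huS (hno u (Or.inr huE))
            · rcases Ez' hz 3 4 (by decide) with h | h
              · exact absurd hz4S (hno (z 4) (Or.inl h))
              · exact absurd hz4S (hno (z 4) (Or.inr h))
  · -- ⋆1 fails
    rcases Ez' hz 0 1 (by decide) with hE01 | hE10
    · -- F1b : E(z0,z1) and w z0 > 1
      have hw0 : 1 < D.w (z 0) := by
        have h2 := D.w_pos (z 0)
        rcases Nat.lt_or_ge 1 (D.w (z 0)) with h | h
        · exact h
        · exact absurd ⟨hE01, by omega⟩ h1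
      rcases Ez' hz 4 0 (by decide) with hE40 | hE04
      · -- E (z 4) (z 0) : m = 4
        refine construct hinj H3 (D.outN (z 0) ∪ (D.outN (z 1) ∪ {z 0, z 3})) {z 4} 4
          ?_ ?_ ?_ ?_
        · intro x hx y hy
          rw [Set.mem_singleton_iff] at hx hy
          subst hx; subst hy
          exact D.graph.loopless.irrefl _
        · intro x hx
          rw [Set.mem_singleton_iff] at hx
          subst hx
          rintro (h | h | h)
          · exact D.asymm _ _ hE40 h
          · exact hnE 1 4 (by decide) h
          · rcases h with h | h
            exacts [hzne 4 0 (by decide) h, hzne 4 3 (by decide) h]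
        · intro j hj
          rcases (by decide : ∀ j : Fin 5, j ≠ (4:Fin 5) → j = 0 ∨ j = 1 ∨ j = 2 ∨ j = 3) j hj
            with rfl | rfl | rfl | rfl
          · exact Set.mem_union_right _ (Set.mem_union_right _ (by simp))
          · exact Set.mem_union_left _ hE01
          · exact Set.mem_union_right _ (Set.mem_union_left _ hE12)
          · exact Set.mem_union_right _ (Set.mem_union_right _ (by simp))
        · intro S hPS hSA x hxA hno
          have hz4S : z 4 ∈ S := hPS rfl
          rcases hxA with hx | hx | hx
          · exact ⟨z 0, hx, fun t ht hts => hSA t hts (Set.mem_union_left _ ht), hw0⟩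
          · exact ⟨z 1, hx, fun t ht hts =>
              hSA t hts (Set.mem_union_right _ (Set.mem_union_left _ ht)), hw1⟩
          · rcases hx with rfl | rfl
            · exact absurd hz4S (hno (z 4) (Or.inr hE40))
            · rcases Ez' hz 3 4 (by decide) with h | h
              · exact absurd hz4S (hno (z 4) (Or.inl h))
              · exact absurd hz4S (hno (z 4) (Or.inr h))
      · -- E (z 0) (z 4)
        obtain ⟨u, hu⟩ := heavy_has_in hw0
        have hu0 : u ≠ z 0 := fun he => D.irrefl _ (he ▸ hu)
        have hu1 : u ≠ z 1 := fun he => D.asymm _ _ hE01 (he ▸ hu)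
        have hu4 : u ≠ z 4 := fun he => D.asymm _ _ hE04 (he ▸ hu)
        have hu2 : u ≠ z 2 := fun he => hnE 2 0 (by decide) (he ▸ hu)
        have hu3 : u ≠ z 3 := fun he => hnE 3 0 (by decide) (he ▸ hu)
        by_cases hu3adj : D.graph.Adj u (z 3)
        · by_cases hu2adj : D.graph.Adj u (z 2)
          · -- basic contradiction at i = 2
            refine hbasic 2 ⟨?_, ?_⟩
            · exact three_le_gdeg (hzne 1 3 (by decide)) (Ne.symm hu1) (Ne.symm hu3)
                (adjz' hz 2 1 (Or.inr (by decide))) (adjz' hz 2 3 (Or.inl (by decide)))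
                hu2adj.symm
            · rw [show ((2:Fin 5)+1) = 3 from by decide]
              exact three_le_gdeg (hzne 2 4 (by decide)) (Ne.symm hu2) (Ne.symm hu4)
                (adjz' hz 3 2 (Or.inr (by decide))) (adjz' hz 3 4 (Or.inl (by decide)))
                hu3adj.symm
          · -- m = 2
            refine construct hinj H3 (D.outN (z 0) ∪ {z 0, z 1, z 3}) {z 2, u} 2 ?_ ?_ ?_ ?_
            · intro x hx y hy
              simp only [Set.mem_insert_iff, Set.mem_singleton_iff] at hx hy
              rcases hx with rfl | rfl <;> rcases hy with rfl | rfl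
              · exact D.graph.loopless.irrefl _
              · exact fun h => hu2adj h.symm
              · exact hu2adj
              · exact D.graph.loopless.irrefl _
            · intro x hx
              simp only [Set.mem_insert_iff, Set.mem_singleton_iff] at hx
              rcases hx with rfl | rfl
              · rintro (h | h)
                · exact hnE 0 2 (by decide) h
                · rcases h with h | h | h
                  exacts [hzne 2 0 (by decide) h, hzne 2 1 (by decide) h,
                    hzne 2 3 (by decide) h]
              · rintro (h | h)
                · exact D.asymm _ _ hu h
                · rcases h with h | h | h
                  exacts [hu0 h, hu1 h, hu3 h]
            · intro j hj
              rcases (by decide : ∀ j : Fin 5, j ≠ (2:Fin 5) → j = 0 ∨ j = 1 ∨ j = 3 ∨ j = 4)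
                j hj with rfl | rfl | rfl | rfl
              · exact Set.mem_union_right _ (by simp)
              · exact Set.mem_union_right _ (by simp)
              · exact Set.mem_union_right _ (by simp)
              · exact Set.mem_union_left _ hE04
            · intro S hPS hSA x hxA hno
              have hz2S : z 2 ∈ S := hPS (by simp)
              have huS : u ∈ S := hPS (by simp)
              rcases hxA with hx | hx
              · exact ⟨z 0, hx, fun t ht hts => hSA t hts (Set.mem_union_left _ ht), hw0⟩
              · rcases hx with rfl | rfl | rfl
                · exact absurd huS (hno u (Or.inr hu))
                · exact absurd hz2S (hno (z 2) (Or.inl hE12))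
                · rcases Ez' hz 2 3 (by decide) with h | h
                  · exact absurd hz2S (hno (z 2) (Or.inr h))
                  · exact absurd hz2S (hno (z 2) (Or.inl h))
        · -- m = 3
          refine construct hinj H3 (D.outN (z 0) ∪ {z 0, z 1, z 2, z 4}) {z 3, u} 3
            ?_ ?_ ?_ ?_
          · intro x hx y hy
            simp only [Set.mem_insert_iff, Set.mem_singleton_iff] at hx hy
            rcases hx with rfl | rfl <;> rcases hy with rfl | rfl
            · exact D.graph.loopless.irrefl _
            · exact fun h => hu3adj h.symm
            · exact hu3adj
            · exact D.graph.loopless.irrefl _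
          · intro x hx
            simp only [Set.mem_insert_iff, Set.mem_singleton_iff] at hx
            rcases hx with rfl | rfl
            · rintro (h | h)
              · exact hnE 0 3 (by decide) h
              · rcases h with h | h | h | h
                exacts [hzne 3 0 (by decide) h, hzne 3 1 (by decide) h,
                  hzne 3 2 (by decide) h, hzne 3 4 (by decide) h]
            · rintro (h | h)
              · exact D.asymm _ _ hu h
              · rcases h with h | h | h | h
                exacts [hu0 h, hu1 h, hu2 h, hu4 h]
          · intro j hj
            rcases (by decide : ∀ j : Fin 5, j ≠ (3:Fin 5) → j = 0 ∨ j = 1 ∨ j = 2 ∨ j = 4)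
              j hj with rfl | rfl | rfl | rfl
            · exact Set.mem_union_right _ (by simp)
            · exact Set.mem_union_right _ (by simp)
            · exact Set.mem_union_right _ (by simp)
            · exact Set.mem_union_right _ (by simp)
          · intro S hPS hSA x hxA hno
            have hz3S : z 3 ∈ S := hPS (by simp)
            have huS : u ∈ S := hPS (by simp)
            rcases hxA with hx | hx
            · exact ⟨z 0, hx, fun t ht hts => hSA t hts (Set.mem_union_left _ ht), hw0⟩
            · rcases hx with rfl | rfl | rfl | rfl
              · exact absurd huS (hno u (Or.inr hu))
              · exact ⟨z 0, hE01, fun t ht hts => hSA t hts (Set.mem_union_left _ ht), hw0⟩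
              · rcases Ez' hz 2 3 (by decide) with h | h
                · exact absurd hz3S (hno (z 3) (Or.inl h))
                · exact absurd hz3S (hno (z 3) (Or.inr h))
              · rcases Ez' hz 3 4 (by decide) with h | h
                · exact absurd hz3S (hno (z 3) (Or.inr h))
                · exact absurd hz3S (hno (z 3) (Or.inl h))
    · -- F1a : E (z 1) (z 0)
      obtain ⟨u, hu⟩ := heavy_has_in hw1
      have hu0 : u ≠ z 0 := fun he => D.asymm _ _ hE10 (he ▸ hu)
      have hu1 : u ≠ z 1 := fun he => D.irrefl _ (he ▸ hu)
      have hu2 : u ≠ z 2 := fun he => D.asymm _ _ hE12 (he ▸ hu)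
      have hu3 : u ≠ z 3 := fun he => hnE 3 1 (by decide) (he ▸ hu)
      have hu4 : u ≠ z 4 := fun he => hnE 4 1 (by decide) (he ▸ hu)
      by_cases hu3adj : D.graph.Adj u (z 3)
      · by_cases hu4adj : D.graph.Adj u (z 4)
        · -- basic contradiction at i = 3
          refine hbasic 3 ⟨?_, ?_⟩
          · exact three_le_gdeg (hzne 2 4 (by decide)) (Ne.symm hu2) (Ne.symm hu4)
              (adjz' hz 3 2 (Or.inr (by decide))) (adjz' hz 3 4 (Or.inl (by decide)))
              hu3adj.symm
          · rw [show ((3:Fin 5)+1) = 4 from by decide]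
            exact three_le_gdeg (hzne 3 0 (by decide)) (Ne.symm hu3) (Ne.symm hu0)
              (adjz' hz 4 3 (Or.inr (by decide))) (adjz' hz 4 0 (Or.inl (by decide)))
              hu4adj.symm
        · -- m = 4
          refine construct hinj H3 (D.outN (z 1) ∪ {z 1, z 2, z 3}) {z 4, u} 4 ?_ ?_ ?_ ?_
          · intro x hx y hy
            simp only [Set.mem_insert_iff, Set.mem_singleton_iff] at hx hy
            rcases hx with rfl | rfl <;> rcases hy with rfl | rfl
            · exact D.graph.loopless.irrefl _
            · exact fun h => hu4adj h.symm
            · exact hu4adj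
            · exact D.graph.loopless.irrefl _
          · intro x hx
            simp only [Set.mem_insert_iff, Set.mem_singleton_iff] at hx
            rcases hx with rfl | rfl
            · rintro (h | h)
              · exact hnE 1 4 (by decide) h
              · rcases h with h | h | h
                exacts [hzne 4 1 (by decide) h, hzne 4 2 (by decide) h,
                  hzne 4 3 (by decide) h]
            · rintro (h | h)
              · exact D.asymm _ _ hu h
              · rcases h with h | h | h
                exacts [hu1 h, hu2 h, hu3 h]
          · intro j hj
            rcases (by decide : ∀ j : Fin 5, j ≠ (4:Fin 5) → j = 0 ∨ j = 1 ∨ j = 2 ∨ j = 3)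
              j hj with rfl | rfl | rfl | rfl
            · exact Set.mem_union_left _ hE10
            · exact Set.mem_union_right _ (by simp)
            · exact Set.mem_union_right _ (by simp)
            · exact Set.mem_union_right _ (by simp)
          · intro S hPS hSA x hxA hno
            have hz4S : z 4 ∈ S := hPS (by simp)
            have huS : u ∈ S := hPS (by simp)
            rcases hxA with hx | hx
            · exact ⟨z 1, hx, fun t ht hts => hSA t hts (Set.mem_union_left _ ht), hw1⟩
            · rcases hx with rfl | rfl | rfl
              · exact absurd huS (hno u (Or.inr hu))
              · exact ⟨z 1, hE12, fun t ht hts => hSA t hts (Set.mem_union_left _ ht), hw1⟩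
              · rcases Ez' hz 3 4 (by decide) with h | h
                · exact absurd hz4S (hno (z 4) (Or.inl h))
                · exact absurd hz4S (hno (z 4) (Or.inr h))
      · -- m = 3
        refine construct hinj H3 (D.outN (z 1) ∪ {z 1, z 2, z 4}) {z 3, u} 3 ?_ ?_ ?_ ?_
        · intro x hx y hy
          simp only [Set.mem_insert_iff, Set.mem_singleton_iff] at hx hy
          rcases hx with rfl | rfl <;> rcases hy with rfl | rfl
          · exact D.graph.loopless.irrefl _
          · exact fun h => hu3adj h.symm
          · exact hu3adj
          · exact D.graph.loopless.irrefl _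
        · intro x hx
          simp only [Set.mem_insert_iff, Set.mem_singleton_iff] at hx
          rcases hx with rfl | rfl
          · rintro (h | h)
            · exact hnE 1 3 (by decide) h
            · rcases h with h | h | h
              exacts [hzne 3 1 (by decide) h, hzne 3 2 (by decide) h, hzne 3 4 (by decide) h]
          · rintro (h | h)
            · exact D.asymm _ _ hu h
            · rcases h with h | h | h
              exacts [hu1 h, hu2 h, hu4 h]
        · intro j hj
          rcases (by decide : ∀ j : Fin 5, j ≠ (3:Fin 5) → j = 0 ∨ j = 1 ∨ j = 2 ∨ j = 4)
            j hj with rfl | rfl | rfl | rfl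
          · exact Set.mem_union_left _ hE10
          · exact Set.mem_union_right _ (by simp)
          · exact Set.mem_union_right _ (by simp)
          · exact Set.mem_union_right _ (by simp)
        · intro S hPS hSA x hxA hno
          have hz3S : z 3 ∈ S := hPS (by simp)
          have huS : u ∈ S := hPS (by simp)
          rcases hxA with hx | hx
          · exact ⟨z 1, hx, fun t ht hts => hSA t hts (Set.mem_union_left _ ht), hw1⟩
          · rcases hx with rfl | rfl | rfl
            · exact absurd huS (hno u (Or.inr hu))
            · exact ⟨z 1, hE12, fun t ht hts => hSA t hts (Set.mem_union_left _ ht), hw1⟩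
            · rcases Ez' hz 3 4 (by decide) with h | h
              · exact absurd hz3S (hno (z 3) (Or.inr h))
              · exact absurd hz3S (hno (z 3) (Or.inl h))

end Backward

/-- Proposition `Basic5Cycle-Equ`. -/
theorem stmt9 {V : Type} [Fintype V] (D : WOGraph V) (z : Fin 5 → V)
    (hz : IsBasic5Cycle D.graph z) :
    D.HasStarProp z ↔ ∀ C : Set V, D.IsStrongVC C → (C ∩ Set.range z).ncard = 3 := by
  classical
  constructor
  · intro hstar C hC
    obtain ⟨hz5, hbasic⟩ := hz
    have hinj : Function.Injective z := hz5.1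
    set F : Finset (Fin 5) := Finset.univ.filter (fun i => z i ∈ C) with hF
    have hmemF : ∀ i, i ∈ F ↔ z i ∈ C := by
      intro i; simp [hF]
    have hcover : ∀ i : Fin 5, i ∈ F ∨ i + 1 ∈ F := by
      intro i
      rcases E_or_of_adj ((hz5.2 i (i+1)).mpr (Or.inl rfl)) with h | h
      · rcases hC.1 _ _ h with h' | h'
        exacts [Or.inl ((hmemF i).mpr h'), Or.inr ((hmemF _).mpr h')]
      · rcases hC.1 _ _ h with h' | h'
        exacts [Or.inr ((hmemF _).mpr h'), Or.inl ((hmemF i).mpr h')]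
    have hncard : (C ∩ Set.range z).ncard = F.card := by
      have himg : C ∩ Set.range z = z '' (↑F : Set (Fin 5)) := by
        ext x
        constructor
        · rintro ⟨hxC, j, rfl⟩
          exact ⟨j, (hmemF j).mpr hxC, rfl⟩
        · rintro ⟨j, hj, rfl⟩
          exact ⟨(hmemF j).mp hj, j, rfl⟩
      rw [himg, Set.ncard_image_of_injective _ hinj, Set.ncard_coe_finset]
    rcases (by decide : ∀ F : Finset (Fin 5), (∀ i, i ∈ F ∨ i + 1 ∈ F) →
        (F.card = 3 ∨ (∃ k, k ∉ F ∧ ∀ j, j ≠ k → j ∈ F) ∨ ∀ j, j ∈ F)) F hcover with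
      h3 | ⟨k, hk, hkr⟩ | hall
    · rw [hncard]; exact h3
    · exfalso
      have hz' := ind5_rot hz5 k
      have hstar' := star_rot hstar k
      have h0' : (fun j => z (j + k)) 0 ∉ C := by
        show z (0 + k) ∉ C
        rw [zero_add]
        exact fun hc => hk ((hmemF k).mpr hc)
      have hrest' : ∀ j, j ≠ 0 → (fun j => z (j + k)) j ∈ C := by
        intro j hj
        refine (hmemF _).mp (hkr (j + k) ?_)
        intro he
        apply hj
        have h2 : j + k = 0 + k := by rw [he, zero_add]
        exact add_right_cancel h2
      by_cases hd3 : gdeg D.graph ((fun j => z (j + k)) 3) ≤ 2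
      · exact lemSL hz' hstar' hC h0' hrest' hd3
      · have hd2 : gdeg D.graph ((fun j => z (j + k)) 2) ≤ 2 := by
          have hbb := (basic_rot ⟨hz5, hbasic⟩ k).2 2
          rw [show ((2:Fin 5)+1) = 3 from by decide] at hbb
          have hbb' : ¬(3 ≤ gdeg D.graph (z (2 + k)) ∧ 3 ≤ gdeg D.graph (z (3 + k))) := hbb
          have hd3' : ¬ gdeg D.graph (z (3 + k)) ≤ 2 := hd3
          show gdeg D.graph (z (2 + k)) ≤ 2
          omega
        refine lemSL (ind5_refl hz' 0) (star_refl hstar' 0) hC ?_ ?_ ?_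
        · show z ((0 - 0) + k) ∉ C
          rw [show ((0:Fin 5) - 0) = 0 from by decide]
          exact h0'
        · intro j hj
          show z ((0 - j) + k) ∈ C
          refine hrest' (0 - j) ?_
          intro he
          apply hj
          have : -j = -(0:Fin 5) := by
            rw [neg_zero, ← zero_sub]
            exact he
          exact neg_injective this
        · show gdeg D.graph (z ((0 - 3) + k)) ≤ 2
          rw [show ((0:Fin 5) - 3) = 2 from by decide]
          exact hd2
    · exfalso
      obtain ⟨i, hi, hi1⟩ := (by decide : ∀ F' : Finset (Fin 5),
          (∀ i, ¬(i ∈ F' ∧ i + 1 ∈ F')) → ∃ i, i ∉ F' ∧ i + 1 ∉ F')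
        (Finset.univ.filter (fun i => 3 ≤ gdeg D.graph (z i)))
        (by
          intro i
          simp only [Finset.mem_filter, Finset.mem_univ, true_and]
          exact fun hh => hbasic i ⟨hh.1, hh.2⟩)
      simp only [Finset.mem_filter, Finset.mem_univ, true_and, not_le] at hi hi1
      refine lemD1 (ind5_rot hz5 i) (star_rot hstar i) hC
        (fun j => (hmemF _).mp (hall _)) ?_ ?_
      · show gdeg D.graph (z (0 + i)) ≤ 2
        rw [zero_add]
        omega
      · show gdeg D.graph (z (1 + i)) ≤ 2
        rw [show (1:Fin 5) + i = i + 1 from by ring]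
        omega
  · intro H3 i
    constructor
    · rintro ⟨hE, hw⟩
      by_contra hns
      refine CL (basic_rot hz (i - 1)) (z := fun j => z (j + (i - 1))) ?_ ?_ ?_ ?_
      · show D.E (z (1 + (i - 1))) (z (2 + (i - 1)))
        rw [show 1 + (i - 1) = i from by ring, show 2 + (i - 1) = i + 1 from by ring]
        exact hE
      · show 1 < D.w (z (1 + (i - 1)))
        rw [show 1 + (i - 1) = i from by ring]
        exact hw
      · show ¬ StarCond D (z (0 + (i - 1))) (z (1 + (i - 1))) (z (2 + (i - 1)))
          (z (3 + (i - 1))) (z (4 + (i - 1)))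
        rw [show 0 + (i - 1) = i - 1 from by ring, show 1 + (i - 1) = i from by ring,
          show 2 + (i - 1) = i + 1 from by ring, show 3 + (i - 1) = i + 2 from by ring,
          show 4 + (i - 1) = i + 3 from by ring]
        exact hns
      · intro C hC
        rw [range_rot]
        exact H3 C hC
    · rintro ⟨hE, hw⟩
      by_contra hns
      refine CL (basic_refl hz (i + 2)) (z := fun j => z ((i + 2) - j)) ?_ ?_ ?_ ?_
      · show D.E (z ((i + 2) - 1)) (z ((i + 2) - 2))
        rw [show (i + 2) - 1 = i + 1 from by ring, show (i + 2) - 2 = i from by ring]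
        exact hE
      · show 1 < D.w (z ((i + 2) - 1))
        rw [show (i + 2) - 1 = i + 1 from by ring]
        exact hw
      · show ¬ StarCond D (z ((i + 2) - 0)) (z ((i + 2) - 1)) (z ((i + 2) - 2))
          (z ((i + 2) - 3)) (z ((i + 2) - 4))
        rw [show (i + 2) - 0 = i + 2 from by ring, show (i + 2) - 1 = i + 1 from by ring,
          show (i + 2) - 2 = i from by ring, show (i + 2) - 3 = i - 1 from by ring,
          show (i + 2) - 4 = i - 2 from by ring]
        exact hns
      · intro C hC
        rw [range_refl]
        exact H3 C hC
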